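/- If w_i ≥ w_{i+1} for all i = 1,...,λ−1 and w_1 > w_λ, then the function u(p) = λ Σ_{i=1}^{λ} w_i C(λ−1,i−1) p^{i−1}(1−p)^{λ−i} is strictly decreasing on [0,1]. -/

import Mathlib

open Finset

/-- If the weights are nonincreasing and not all equal (`w 1 > w λ`), then
`u(p) = λ ∑_{i=1}^{λ} w_i C(λ-1,i-1) p^{i-1}(1-p)^{λ-i}` is strictly decreasing on `[0,1]`. -/
theorem stmt_5 (lam : ℕ) (hlam : 2 ≤ lam) (w : Fin lam → ℝ)
    (hmono : ∀ i j : Fin lam, i ≤ j → w j ≤ w i)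
    (hstrict : w ⟨0, by omega⟩ > w ⟨lam - 1, by omega⟩) :
    StrictAntiOn (fun t : ℝ => (lam : ℝ) *
        ∑ i : Fin lam, w i * (Nat.choose (lam - 1) i : ℝ) * t ^ (i : ℕ) * (1 - t) ^ (lam - 1 - i))
      (Set.Icc (0:ℝ) 1) := by
  obtain ⟨n, rfl⟩ : ∃ n, lam = n + 1 := ⟨lam - 1, by omega⟩
  have hn : 1 ≤ n := by omega
  set W : ℕ → ℝ := fun i => w ⟨min i n, by omega⟩ with hWdef
  have hWmono : ∀ i j : ℕ, i ≤ j → W j ≤ W i := by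
    intro i j hij
    exact hmono _ _ (by simp [Fin.le_def]; omega)
  have hfun : (fun t : ℝ => ((n+1 : ℕ) : ℝ) *
        ∑ i : Fin (n+1), w i * (Nat.choose (n+1-1) i : ℝ) * t ^ (i : ℕ) * (1 - t) ^ (n+1-1-(i:ℕ)))
      = fun t : ℝ => ((n+1 : ℕ) : ℝ) *
        ∑ i ∈ range (n+1), W i * (Nat.choose n i : ℝ) * t ^ i * (1 - t) ^ (n - i) := by
    funext t
    congr 1
    rw [← Fin.sum_univ_eq_sum_range (fun i => W i * (Nat.choose n i : ℝ) * t ^ i * (1 - t) ^ (n - i)) (n+1)]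
    refine Finset.sum_congr rfl fun i _ => ?_
    have h1 : W (i : ℕ) = w i := by
      simp only [hWdef]
      congr 1
      exact Fin.ext (by simp; omega)
    simp [h1]
  rw [hfun]
  apply strictAntiOn_of_deriv_neg (convex_Icc 0 1)
  · apply Continuous.continuousOn
    apply Continuous.mul continuous_const
    apply continuous_finset_sum
    intro i _
    fun_prop
  · intro x hx
    rw [interior_Icc] at hx
    obtain ⟨hx0, hx1⟩ := hx
    have hterm : ∀ i ∈ range (n+1),
        HasDerivAt (fun t : ℝ => W i * (Nat.choose n i : ℝ) * t ^ i * (1 - t) ^ (n - i))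
          (W i * (Nat.choose n i : ℝ) * ((i:ℝ) * x ^ (i-1)) * (1-x) ^ (n-i)
            + W i * (Nat.choose n i : ℝ) * x ^ i * (((n-i:ℕ):ℝ) * (1-x) ^ (n-i-1) * (-1))) x := by
      intro i _
      exact ((hasDerivAt_pow i x).const_mul _).mul (((hasDerivAt_id x).const_sub 1).pow (n-i))
    have hder := (HasDerivAt.fun_sum hterm).const_mul ((n+1 : ℕ) : ℝ)
    rw [hder.deriv]
    have key : (∑ i ∈ range (n+1),
        (W i * (Nat.choose n i : ℝ) * ((i:ℝ) * x ^ (i-1)) * (1-x) ^ (n-i)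
          + W i * (Nat.choose n i : ℝ) * x ^ i * (((n-i:ℕ):ℝ) * (1-x) ^ (n-i-1) * (-1))))
      = ∑ j ∈ range n, (W (j+1) - W j) * ((Nat.choose n (j+1) * (j+1) : ℕ) : ℝ) * x ^ j * (1-x) ^ (n-1-j) := by
      have split : ∀ i ∈ range (n+1),
          (W i * (Nat.choose n i : ℝ) * ((i:ℝ) * x ^ (i-1)) * (1-x) ^ (n-i)
            + W i * (Nat.choose n i : ℝ) * x ^ i * (((n-i:ℕ):ℝ) * (1-x) ^ (n-i-1) * (-1)))
          = (W i * (Nat.choose n i : ℝ) * (i:ℝ) * x ^ (i-1) * (1-x) ^ (n-i))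
            - (W i * (Nat.choose n i : ℝ) * ((n-i:ℕ):ℝ) * x ^ i * (1-x) ^ (n-i-1)) := by
        intro i _; ring
      rw [Finset.sum_congr rfl split, Finset.sum_sub_distrib,
        Finset.sum_range_succ' (fun i => W i * (Nat.choose n i : ℝ) * (i:ℝ) * x ^ (i-1) * (1-x) ^ (n-i)) n,
        Finset.sum_range_succ (fun i => W i * (Nat.choose n i : ℝ) * ((n-i:ℕ):ℝ) * x ^ i * (1-x) ^ (n-i-1)) n]
      simp only [Nat.cast_zero, Nat.sub_self, mul_zero, zero_mul, add_zero]
      rw [← Finset.sum_sub_distrib]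
      refine Finset.sum_congr rfl fun j hj => ?_
      have hjn : j < n := mem_range.mp hj
      have e1 : n - (j+1) = n - 1 - j := by omega
      have e2 : n - j - 1 = n - 1 - j := by omega
      have e3 : j + 1 - 1 = j := by omega
      rw [e1, e2, e3]
      have hcc : ((Nat.choose n (j+1) : ℝ)) * ((j:ℝ) + 1) = (Nat.choose n j : ℝ) * ((n:ℝ) - (j:ℝ)) := by
        have h := Nat.choose_succ_right_eq n j
        have hle : j ≤ n := by omega
        have : ((Nat.choose n (j+1) * (j+1) : ℕ) : ℝ) = ((Nat.choose n j * (n - j) : ℕ) : ℝ) := by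
          exact_mod_cast congrArg (Nat.cast : ℕ → ℝ) h
        push_cast [Nat.cast_sub hle] at this
        linarith [this]
      have hle : j ≤ n := by omega
      push_cast [Nat.cast_sub hle]
      linear_combination (W j * x ^ j * (1-x) ^ (n-1-j)) * hcc
    rw [key]
    have hwit : ∃ j, j < n ∧ W (j+1) < W j := by
      by_contra h
      push_neg at h
      have key2 : ∀ k, k ≤ n → W 0 ≤ W k := by
        intro k
        induction k with
        | zero => intro _; exact le_refl _
        | succ m ih => intro hm; exact le_trans (ih (by omega)) (h m (by omega))
      have h1 : W 0 ≤ W n := key2 n le_rfl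
      have h2 : W 0 = w ⟨0, by omega⟩ := by simp [hWdef]
      have h3 : W n = w ⟨n + 1 - 1, by omega⟩ := by simp [hWdef]
      rw [h2, h3] at h1
      exact absurd hstrict (not_lt.mpr h1)
    obtain ⟨j0, hj0n, hj0⟩ := hwit
    have hsum : (∑ j ∈ range n, (W (j+1) - W j) * ((Nat.choose n (j+1) * (j+1) : ℕ) : ℝ) * x ^ j * (1-x) ^ (n-1-j)) < 0 := by
      have hlt := Finset.sum_lt_sum
        (f := fun j => (W (j+1) - W j) * ((Nat.choose n (j+1) * (j+1) : ℕ) : ℝ) * x ^ j * (1-x) ^ (n-1-j))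
        (g := fun _ => (0:ℝ)) (s := range n) ?_ ?_
      · simpa using hlt
      · intro j hj
        have hjn : j < n := mem_range.mp hj
        have hc : (0:ℝ) < ((Nat.choose n (j+1) * (j+1) : ℕ) : ℝ) := by
          exact_mod_cast Nat.mul_pos (Nat.choose_pos (by omega)) (by omega)
        have hpos : (0:ℝ) < ((Nat.choose n (j+1) * (j+1) : ℕ) : ℝ) * x ^ j * (1-x) ^ (n-1-j) := by
          have h1x : (0:ℝ) < 1 - x := by linarith
          positivity
        have hle : W (j+1) - W j ≤ 0 := by linarith [hWmono j (j+1) (Nat.le_succ j)]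
        have : (W (j+1) - W j) * ((Nat.choose n (j+1) * (j+1) : ℕ) : ℝ) * x ^ j * (1-x) ^ (n-1-j)
            = (W (j+1) - W j) * (((Nat.choose n (j+1) * (j+1) : ℕ) : ℝ) * x ^ j * (1-x) ^ (n-1-j)) := by ring
        beta_reduce
        rw [this]
        exact mul_nonpos_of_nonpos_of_nonneg hle hpos.le
      · refine ⟨j0, mem_range.mpr hj0n, ?_⟩
        have hc : (0:ℝ) < ((Nat.choose n (j0+1) * (j0+1) : ℕ) : ℝ) := by
          exact_mod_cast Nat.mul_pos (Nat.choose_pos (by omega)) (by omega)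
        have hpos : (0:ℝ) < ((Nat.choose n (j0+1) * (j0+1) : ℕ) : ℝ) * x ^ j0 * (1-x) ^ (n-1-j0) := by
          have h1x : (0:ℝ) < 1 - x := by linarith
          positivity
        have hneg : W (j0+1) - W j0 < 0 := by linarith
        have : (W (j0+1) - W j0) * ((Nat.choose n (j0+1) * (j0+1) : ℕ) : ℝ) * x ^ j0 * (1-x) ^ (n-1-j0)
            = (W (j0+1) - W j0) * (((Nat.choose n (j0+1) * (j0+1) : ℕ) : ℝ) * x ^ j0 * (1-x) ^ (n-1-j0)) := by ring
        beta_reduce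
        rw [this]
        exact mul_neg_of_neg_of_pos hneg hpos
    have hpos : (0:ℝ) < ((n+1 : ℕ) : ℝ) := by positivity
    exact mul_neg_of_pos_of_neg hpos hsum
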